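/- For B_n with ℓ=4 (p=2), the vector Q = (1/√2)(2ρ^∨ − ρ) equals (1/(2√2)) Σ_{j=1}^n j·α_j, and (Q,Q) = n/4, so the central charge c = n − 12(Q,Q) = −2n. -/

import Mathlib

open scoped RealInnerProductSpace

private lemma sum_ite_val {n : ℕ} (m : ℕ) (f : Fin n → ℝ) :
    ∑ j : Fin n, (if j.val = m then f j else 0) = if h : m < n then f ⟨m, h⟩ else 0 := by
  split_ifs with h
  · rw [Finset.sum_eq_single ⟨m, h⟩]
    · simp
    · intro j _ hj
      rw [if_neg]
      intro he; exact hj (Fin.ext he)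
    · simp
  · apply Finset.sum_eq_zero
    intro j _
    rw [if_neg]
    intro he; exact h (he ▸ j.isLt)

/-- For `B_n` with `ℓ = 4` (`p = 2`): with simple roots `α 0, …, α (n-1)` (standard `B_n`
inner products, `α (n-1)` the short root), `ρ` the half-sum of positive roots and `ρ∨` the
half-sum of positive coroots (characterized by `(α i, ρ) = (α i, α i)/2`, `(α i, ρ∨) = 1`,
both lying in the span of the roots), the vector `Q = (1/√2)(2ρ∨ − ρ)` equals
`(1/(2√2)) Σ_{j=1}^n j·α_j`, and `(Q,Q) = n/4`, so the central charge
`c = n − 12(Q,Q) = −2n`. -/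
theorem stmt_7 {V : Type*} [NormedAddCommGroup V] [InnerProductSpace ℝ V]
    (n : ℕ) (hn : 0 < n) (α : Fin n → V) (ρ ρv : V)
    (hdiag : ∀ i : Fin n, ⟪α i, α i⟫ = if i.val = n - 1 then 2 else 4)
    (hadj : ∀ i j : Fin n, j.val = i.val + 1 → ⟪α i, α j⟫ = -2)
    (hfar : ∀ i j : Fin n, i.val + 1 < j.val → ⟪α i, α j⟫ = 0)
    (hρ : ∀ i, ⟪α i, ρ⟫ = ⟪α i, α i⟫ / 2)
    (hρv : ∀ i, ⟪α i, ρv⟫ = 1)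
    (hρmem : ρ ∈ Submodule.span ℝ (Set.range α))
    (hρvmem : ρv ∈ Submodule.span ℝ (Set.range α)) :
    (Real.sqrt 2)⁻¹ • ((2:ℝ) • ρv - ρ)
        = (1/(2 * Real.sqrt 2)) • ∑ j : Fin n, ((j.val : ℝ) + 1) • α j
    ∧ ⟪(1/(2 * Real.sqrt 2)) • ∑ j : Fin n, ((j.val : ℝ) + 1) • α j,
        (1/(2 * Real.sqrt 2)) • ∑ j : Fin n, ((j.val : ℝ) + 1) • α j⟫ = n / 4
    ∧ (n : ℝ) - 12 * ((n : ℝ) / 4) = -2 * n := by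
  have h2 : Real.sqrt 2 * Real.sqrt 2 = 2 := Real.mul_self_sqrt (by norm_num)
  have hs0 : Real.sqrt 2 ≠ 0 := by positivity
  set S : V := ∑ j : Fin n, ((j.val : ℝ) + 1) • α j with hS
  -- the key computation
  have key : ∀ i : Fin n, ⟪α i, S⟫ = if i.val = n - 1 then 2 else 0 := by
    intro i
    set d : ℝ := (if i.val = n - 1 then (2:ℝ) else 4) with hd
    have gsplit : ∀ j : Fin n, ⟪α i, α j⟫ =
        (if j.val = i.val then d else 0)
        + (if j.val = i.val + 1 then -2 else 0)
        + (if j.val + 1 = i.val then -2 else 0) := by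
      intro j
      rcases lt_trichotomy j.val i.val with h | h | h
      · rcases eq_or_lt_of_le (Nat.succ_le_of_lt h) with h1 | h1
        · rw [real_inner_comm, hadj j i h1.symm, if_neg (by omega), if_neg (by omega),
            if_pos h1]
          ring
        · rw [real_inner_comm, hfar j i h1, if_neg (by omega), if_neg (by omega),
            if_neg (by omega)]
          ring
      · have hj : j = i := Fin.ext h
        rw [hj, hdiag i, ← hd, if_pos rfl, if_neg (by omega), if_neg (by omega)]
        ring
      · rcases eq_or_lt_of_le (Nat.succ_le_of_lt h) with h1 | h1
        · rw [hadj i j h1.symm, if_neg (by omega), if_pos h1.symm, if_neg (by omega)]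
          ring
        · rw [hfar i j h1, if_neg (by omega), if_neg (by omega), if_neg (by omega)]
          ring
    rw [hS, inner_sum]
    simp only [inner_smul_right, gsplit, mul_add, mul_ite, mul_zero]
    rw [Finset.sum_add_distrib, Finset.sum_add_distrib]
    have e1 : (∑ j : Fin n, if j.val = i.val then ((j.val:ℝ)+1) * d else 0)
        = ((i.val:ℝ)+1) * d := by
      rw [sum_ite_val i.val (fun j => ((j.val:ℝ)+1) * d)]
      rw [dif_pos i.isLt]
    have e2 : (∑ j : Fin n, if j.val = i.val + 1 then ((j.val:ℝ)+1) * (-2:ℝ) else 0)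
        = if h : i.val + 1 < n then (((i.val:ℝ)+1)+1) * (-2) else 0 := by
      rw [sum_ite_val (i.val+1) (fun j => ((j.val:ℝ)+1) * (-2:ℝ))]
      split_ifs with h
      · push_cast; ring
      · rfl
    have e3 : (∑ j : Fin n, if j.val + 1 = i.val then ((j.val:ℝ)+1) * (-2:ℝ) else 0)
        = if 1 ≤ i.val then ((i.val:ℝ)) * (-2) else 0 := by
      by_cases hz : 1 ≤ i.val
      · rw [if_pos hz]
        have : ∀ j : Fin n, (if j.val + 1 = i.val then ((j.val:ℝ)+1) * (-2:ℝ) else 0)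
            = (if j.val = i.val - 1 then ((j.val:ℝ)+1) * (-2:ℝ) else 0) := by
          intro j; apply if_congr (by omega) rfl rfl
        rw [Finset.sum_congr rfl (fun j _ => this j),
          sum_ite_val (i.val - 1) (fun j => ((j.val:ℝ)+1) * (-2:ℝ)),
          dif_pos (by omega : i.val - 1 < n)]
        have : ((i.val - 1 : ℕ) : ℝ) = (i.val : ℝ) - 1 := by
          rw [Nat.cast_sub hz]; norm_num
        rw [this]; ring
      · rw [if_neg hz]
        apply Finset.sum_eq_zero
        intro j _
        rw [if_neg (by omega)]
    rw [e1, e2, e3, hd]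
    by_cases hlast : i.val = n - 1
    · rw [if_pos hlast, if_pos hlast, dif_neg (by omega : ¬ (i.val + 1 < n))]
      by_cases hz : 1 ≤ i.val
      · rw [if_pos hz]
        have : (i.val : ℝ) = (n : ℝ) - 1 := by
          rw [hlast, Nat.cast_sub hn]; norm_num
        rw [this]; ring
      · have hn1 : n = 1 := by omega
        rw [if_neg hz]
        have : (i.val : ℝ) = 0 := by
          have : i.val = 0 := by omega
          rw [this]; norm_num
        rw [this]; ring
    · rw [if_neg hlast, if_neg hlast, dif_pos (by omega : i.val + 1 < n)]
      by_cases hz : 1 ≤ i.val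
      · rw [if_pos hz]; ring
      · rw [if_neg hz]
        have : (i.val : ℝ) = 0 := by
          have : i.val = 0 := by omega
          rw [this]; norm_num
        rw [this]; ring
  -- S lies in the span
  have hSmem : S ∈ Submodule.span ℝ (Set.range α) := by
    rw [hS]
    exact Submodule.sum_mem _ fun j _ =>
      Submodule.smul_mem _ _ (Submodule.subset_span ⟨j, rfl⟩)
  -- 2ρ∨ − ρ = (1/2) S
  have hw : (2:ℝ) • ρv - ρ = (1/2 : ℝ) • S := by
    set w : V := ((2:ℝ) • ρv - ρ) - (1/2 : ℝ) • S with hwdef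
    have hwmem : w ∈ Submodule.span ℝ (Set.range α) :=
      sub_mem (sub_mem (Submodule.smul_mem _ _ hρvmem) hρmem) (Submodule.smul_mem _ _ hSmem)
    have hwo : ∀ i, ⟪α i, w⟫ = 0 := by
      intro i
      rw [hwdef]
      rw [inner_sub_right, inner_sub_right, inner_smul_right, inner_smul_right,
        hρ i, hρv i, key i, hdiag i]
      by_cases h : i.val = n - 1 <;> simp [h] <;> ring
    have hall : ∀ v ∈ Submodule.span ℝ (Set.range α), ⟪v, w⟫ = 0 := by
      intro v hv
      induction hv using Submodule.span_induction with
      | mem x hx => obtain ⟨i, rfl⟩ := hx; exact hwo i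
      | zero => exact inner_zero_left w
      | add x y _ _ hx hy => rw [inner_add_left, hx, hy]; ring
      | smul c x _ hx => rw [real_inner_smul_left, hx]; ring
    have hw0 : w = 0 := by
      have := hall w hwmem
      exact inner_self_eq_zero.mp this
    have := sub_eq_zero.mp hw0
    exact this
  -- ⟪S, S⟫ = 2n
  have hSS : ⟪S, S⟫ = 2 * (n : ℝ) := by
    conv_lhs => rw [hS]
    rw [sum_inner]
    simp only [real_inner_smul_left, ← hS, key, mul_ite, mul_zero]
    rw [sum_ite_val (n-1) (fun i => ((i.val:ℝ)+1) * 2), dif_pos (by omega : n - 1 < n)]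
    have : ((n - 1 : ℕ) : ℝ) = (n : ℝ) - 1 := by
      rw [Nat.cast_sub hn]; norm_num
    simp only [this]; ring
  refine ⟨?_, ?_, by ring⟩
  · rw [hw, smul_smul]
    congr 1
    field_simp
  · rw [real_inner_smul_left, real_inner_smul_right, hSS]
    field_simp
    nlinarith [h2, Real.sqrt_nonneg 2]
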